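/- Let q = 2^n, let f ∈ F_q[x], and let α ∈ F_q*. The polynomials (L_α f)' and (L_α f)^[2] have a common root in the algebraic closure of F_2 if and only if (D_α f)' and (D_α f)^[2] have a common root in the algebraic closure of F_2. -/

import Mathlib

open Polynomial

private lemma hasseDeriv_map' {R S : Type*} [CommRing R] [CommRing S] (φ : R →+* S)
    (k : ℕ) (p : R[X]) : (hasseDeriv k p).map φ = hasseDeriv k (p.map φ) := by
  ext m
  simp [hasseDeriv_coeff, coeff_map]

private lemma qpow_coeff_one {R : Type*} [CommRing R] (a : R) (m : ℕ) :
    ((X * (X + C a)) ^ m).coeff 1 = if m = 1 then a else 0 := by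
  rw [mul_pow, mul_comm, coeff_mul_X_pow']
  match m with
  | 0 => simp [coeff_one]
  | 1 => simp
  | (m + 2) => simp

private lemma qpow_coeff_two {R : Type*} [CommRing R] (a : R) (m : ℕ) :
    ((X * (X + C a)) ^ m).coeff 2 = if m = 1 then 1 else if m = 2 then a ^ 2 else 0 := by
  rw [mul_pow, mul_comm, coeff_mul_X_pow']
  match m with
  | 0 => simp [coeff_one]
  | 1 => simp
  | 2 => simp [sq, mul_coeff_zero]
  | (m + 3) => simp

private lemma comp_coeff_one {R : Type*} [CommRing R] (H : R[X]) (a : R) :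
    (H.comp (X * (X + C a))).coeff 1 = a * H.coeff 1 := by
  rw [comp_eq_sum_left, coeff_sum, Polynomial.sum_def]
  have h : ∀ e ∈ H.support, (C (H.coeff e) * (X * (X + C a)) ^ e).coeff 1
      = if e = 1 then a * H.coeff e else 0 := by
    intro e _
    rw [coeff_C_mul, qpow_coeff_one]
    split_ifs with h1 <;> simp [mul_comm]
  rw [Finset.sum_congr rfl h, Finset.sum_ite_eq']
  by_cases h1 : 1 ∈ H.support
  · simp [h1]
  · simp [h1, notMem_support_iff.mp h1]

private lemma comp_coeff_two {R : Type*} [CommRing R] (H : R[X]) (a : R) :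
    (H.comp (X * (X + C a))).coeff 2 = H.coeff 1 + a ^ 2 * H.coeff 2 := by
  rw [comp_eq_sum_left, coeff_sum, Polynomial.sum_def]
  have h : ∀ e ∈ H.support, (C (H.coeff e) * (X * (X + C a)) ^ e).coeff 2
      = (if e = 1 then H.coeff e else 0) + (if e = 2 then a ^ 2 * H.coeff e else 0) := by
    intro e _
    rw [coeff_C_mul, qpow_coeff_two]
    split_ifs with h1 h2 <;> simp_all [mul_comm]
  rw [Finset.sum_congr rfl h, Finset.sum_add_distrib, Finset.sum_ite_eq', Finset.sum_ite_eq']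
  by_cases h1 : 1 ∈ H.support <;> by_cases h2 : 2 ∈ H.support <;>
    simp [h1, h2, notMem_support_iff.mp, *]

private lemma T_comp {L : Type*} [Field L] [CharP L 2] (a x : L) :
    (X * (X + C a)).comp (X + C x) = X * (X + C a) + C (x * (x + a)) := by
  have h2 : (2 : L[X]) = 0 := by
    exact_mod_cast CharP.cast_eq_zero L[X] 2
  simp only [mul_comp, X_comp, add_comp, C_comp, map_mul, map_add]
  linear_combination (X * C x) * h2

private lemma taylor_D {L : Type*} [Field L] [CharP L 2] (a x : L) (G : L[X]) :
    taylor x (G.comp (X * (X + C a)))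
      = (taylor (x * (x + a)) G).comp (X * (X + C a)) := by
  rw [taylor_apply, comp_assoc, T_comp, taylor_apply, comp_assoc]
  congr 1
  simp [add_comm]

private lemma key_one {L : Type*} [Field L] [CharP L 2] (a x : L) (G : L[X]) :
    eval x (derivative (G.comp (X * (X + C a))))
      = a * eval (x * (x + a)) (derivative G) := by
  rw [← hasseDeriv_one, ← taylor_coeff, taylor_D, comp_coeff_one, taylor_coeff,
    hasseDeriv_one]

private lemma key_two {L : Type*} [Field L] [CharP L 2] (a x : L) (G : L[X]) :
    eval x (hasseDeriv 2 (G.comp (X * (X + C a))))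
      = eval (x * (x + a)) (derivative G)
        + a ^ 2 * eval (x * (x + a)) (hasseDeriv 2 G) := by
  rw [← taylor_coeff, taylor_D, comp_coeff_two, taylor_coeff, taylor_coeff, hasseDeriv_one]

private lemma aux {K L : Type*} [Field K] [Field L] [CharP L 2] [IsAlgClosed L]
    [Algebra K L] (α : K) (hα : α ≠ 0) (g D : K[X])
    (hg : g.comp (X * (X + C α)) = D) :
    (∃ x : L, aeval x (derivative g) = 0 ∧ aeval x (hasseDeriv 2 g) = 0) ↔
    (∃ x : L, aeval x (derivative D) = 0 ∧ aeval x (hasseDeriv 2 D) = 0) := by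
  set φ := algebraMap K L with hφ
  set a : L := φ α with haa
  have ha : a ≠ 0 := (map_ne_zero_iff φ φ.injective).mpr hα
  set G : L[X] := g.map φ with hG
  have hmap : D.map φ = G.comp (X * (X + C a)) := by
    rw [← hg, Polynomial.map_comp, hG]
    congr 1
    simp [Polynomial.map_mul, Polynomial.map_add, haa]
  have haev : ∀ (p : K[X]) (x : L), aeval x p = eval x (p.map φ) := fun p x => by
    rw [aeval_def, eval_map]
  constructor
  · rintro ⟨y, h1, h2⟩
    rw [haev, ← derivative_map] at h1
    rw [haev, hasseDeriv_map'] at h2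
    rw [← hG] at h1 h2
    obtain ⟨x, hx⟩ := IsAlgClosed.exists_root (k := L) (X * (X + C a) - C y) (by
      have hq : X * (X + C a) - C y = C (1 : L) * X ^ 2 + C a * X + C (-y) := by rw [C_1, C_neg]; ring
      rw [hq, degree_quadratic one_ne_zero]
      exact two_ne_zero)
    have hxy : x * (x + a) = y := by
      have := hx
      simp only [IsRoot, eval_sub, eval_mul, eval_add, eval_X, eval_C, sub_eq_zero] at this
      exact this
    refine ⟨x, ?_, ?_⟩
    · rw [haev, ← derivative_map, hmap, key_one, hxy, h1, mul_zero]
    · rw [haev, hasseDeriv_map', hmap, key_two, hxy, h1, h2, mul_zero, add_zero]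
  · rintro ⟨x, h1, h2⟩
    rw [haev, ← derivative_map, hmap, key_one] at h1
    rw [haev, hasseDeriv_map', hmap, key_two] at h2
    have hg1 : eval (x * (x + a)) (derivative G) = 0 := by
      rcases mul_eq_zero.mp h1 with h | h
      · exact absurd h ha
      · exact h
    have hg2 : eval (x * (x + a)) (hasseDeriv 2 G) = 0 := by
      rw [hg1, zero_add] at h2
      rcases mul_eq_zero.mp h2 with h | h
      · exact absurd (pow_eq_zero_iff two_ne_zero |>.mp h) ha
      · exact h
    exact ⟨x * (x + a), by rwa [haev, ← derivative_map], by rwa [haev, hasseDeriv_map']⟩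

/-- `(L_α f)'` and `(L_α f)^[2]` have a common root in the algebraic closure iff
`(D_α f)'` and `(D_α f)^[2]` do. -/
theorem stmt6 (n : ℕ) (hn : 1 ≤ n) (α : GaloisField 2 n) (hα : α ≠ 0)
    (f g : Polynomial (GaloisField 2 n))
    (hg : g.comp (X * (X + C α)) = f + f.comp (X + C α)) :
    (∃ x : AlgebraicClosure (GaloisField 2 n),
        aeval x (derivative g) = 0 ∧ aeval x (hasseDeriv 2 g) = 0) ↔
    (∃ x : AlgebraicClosure (GaloisField 2 n),
        aeval x (derivative (f + f.comp (X + C α))) = 0 ∧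
        aeval x (hasseDeriv 2 (f + f.comp (X + C α))) = 0) :=
  aux α hα g _ hg
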